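/- The table next_σ satisfies: for any 0 ≤ t < r and character α, next_σ(t, α) = overlap(P[1..t]·α), where next_σ is defined by next_σ(t,α) = t+1 if α = P[t+1], and next_σ(t,α) = next_σ(kmp(t), α) otherwise (with next_σ(0,α) = 1 if α = P[1] and 0 otherwise), and kmp(t) is the length of the longest proper border of P[1..t]. -/
import Mathlib


/-- `overlapLen P S` is the length of the longest prefix of `P` that is a suffix of `S`. -/
def overlapLen {α : Type*} [DecidableEq α] (P S : List α) : ℕ :=
  Nat.findGreatest (fun k => P.take k <:+ S) P.length

/-- `kmp P t` is the length of the longest proper border of `P[1..t]`, i.e. the largest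
`b < t` with `P[1..b]` a suffix (hence also a proper prefix) of `P[1..t]`. -/
def kmp {α : Type*} [DecidableEq α] (P : List α) (t : ℕ) : ℕ :=
  Nat.findGreatest (fun b => b < t ∧ P.take b <:+ P.take t) t


lemma overlap_suffix {α : Type*} [DecidableEq α] (P S : List α) :
    P.take (overlapLen P S) <:+ S :=
  Nat.findGreatest_spec (P := fun k => P.take k <:+ S) (m := 0) (Nat.zero_le _)
    List.nil_suffix

lemma le_overlap {α : Type*} [DecidableEq α] {P S : List α} {n : ℕ}
    (h1 : n ≤ P.length) (h2 : P.take n <:+ S) : n ≤ overlapLen P S :=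
  Nat.le_findGreatest h1 h2

lemma kmp_spec {α : Type*} [DecidableEq α] (P : List α) {t : ℕ} (ht : 0 < t) :
    kmp P t < t ∧ P.take (kmp P t) <:+ P.take t :=
  Nat.findGreatest_spec (P := fun b => b < t ∧ P.take b <:+ P.take t) (m := 0)
    (Nat.zero_le _) ⟨ht, List.nil_suffix⟩

lemma le_kmp {α : Type*} [DecidableEq α] {P : List α} {t n : ℕ}
    (h1 : n < t) (h2 : P.take n <:+ P.take t) : n ≤ kmp P t :=
  Nat.le_findGreatest h1.le ⟨h1, h2⟩

lemma suffix_of_suffix_length_le' {α : Type*} {l₁ l₂ l : List α}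
    (h₁ : l₁ <:+ l) (h₂ : l₂ <:+ l) (h : l₁.length ≤ l₂.length) : l₁ <:+ l₂ := by
  rw [← List.reverse_prefix] at *
  exact List.prefix_of_prefix_length_le h₁ h₂ (by simpa using h)

lemma suffix_append_single {α : Type*} {l₁ l₂ : List α} (h : l₁ <:+ l₂) (a : α) :
    l₁ ++ [a] <:+ l₂ ++ [a] := by
  obtain ⟨w, hw⟩ := h
  exact ⟨w, by rw [← List.append_assoc, hw]⟩

lemma take_succ_eq {α : Type*} {l : List α} {n : ℕ} (h : n < l.length) :
    l.take (n+1) = l.take n ++ [l[n]] := by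
  rw [List.take_succ, List.getElem?_eq_getElem h]; rfl

lemma overlap_eq {α : Type*} [DecidableEq α] {P S : List α} {m : ℕ}
    (hm : m ≤ P.length) (hs : P.take m <:+ S)
    (hmax : ∀ n, m < n → n ≤ P.length → ¬ P.take n <:+ S) :
    overlapLen P S = m := by
  rw [overlapLen, Nat.findGreatest_eq_iff]
  exact ⟨hm, fun _ => hs, fun n h1 h2 => hmax n h1 h2⟩

/-- any table `f` satisfying the defining recurrence of `next_σ`
(namely f(0,α) = 1 if α = P[1] else 0; and for 1 ≤ t < r, f(t,α) = t+1 if α = P[t+1]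
and f(t,α) = f(kmp(t),α) otherwise) satisfies f(t,α) = overlap(P[1..t]·α) for all
0 ≤ t < r and all α. -/
theorem stmt_16 {α : Type*} [DecidableEq α] [Inhabited α] (P : List α)
    (hr : 1 ≤ P.length) (f : ℕ → α → ℕ)
    (h0 : ∀ a : α, f 0 a = if a = P[0]! then 1 else 0)
    (hrec : ∀ t, 1 ≤ t → t < P.length → ∀ a : α,
      f t a = if a = P[t]! then t + 1 else f (kmp P t) a) :
    ∀ t < P.length, ∀ a : α, f t a = overlapLen P (P.take t ++ [a]) := by
  intro t
  induction t using Nat.strong_induction_on with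
  | _ t IH =>
  intro ht a
  have hPt : P[t]! = P[t] := getElem!_pos P t ht
  by_cases heq : a = P[t]
  · have hf : f t a = t + 1 := by
      rcases Nat.eq_zero_or_pos t with h | h
      · subst h; rw [h0 a, hPt, if_pos heq]
      · rw [hrec t h ht a, hPt, if_pos heq]
    rw [hf]
    symm
    apply overlap_eq ht
    · rw [take_succ_eq ht, ← heq]
    · intro n h1 h2 hsuf
      have := hsuf.length_le
      simp [List.length_take, Nat.min_eq_left h2, Nat.min_eq_left ht.le] at this
      omega
  · -- a ≠ P[t]
    have key : ∀ n, n ≤ P.length → P.take n <:+ P.take t ++ [a] → n ≤ t := by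
      intro n hn hsuf
      have hl := hsuf.length_le
      simp [List.length_take, Nat.min_eq_left hn, Nat.min_eq_left ht.le] at hl
      by_contra hc
      have hnt : n = t + 1 := by omega
      subst hnt
      have heql : P.take (t+1) = P.take t ++ [a] := by
        apply hsuf.eq_of_length
        simp [List.length_take, Nat.min_eq_left hn, Nat.min_eq_left ht.le]
      rw [take_succ_eq ht] at heql
      have := List.append_cancel_left heql
      simp at this
      exact heq this.symm
    rcases Nat.eq_zero_or_pos t with h | hpos
    · subst h
      rw [h0 a, hPt, if_neg heq]
      symm
      apply overlap_eq (Nat.zero_le _) List.nil_suffix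
      intro n h1 h2 hsuf
      have := key n h2 hsuf
      omega
    · set k := kmp P t with hk
      obtain ⟨hkt, hksuf⟩ := kmp_spec P hpos
      have hfk : f t a = f k a := by rw [hrec t hpos ht a, hPt, if_neg heq]
      have hIH : f k a = overlapLen P (P.take k ++ [a]) :=
        IH k hkt (lt_trans hkt ht) a
      rw [hfk, hIH]
      symm
      set m := overlapLen P (P.take k ++ [a]) with hm
      have hmle : m ≤ P.length := Nat.findGreatest_le _
      have hmsuf : P.take m <:+ P.take k ++ [a] := overlap_suffix P _
      apply overlap_eq hmle
      · exact hmsuf.trans (suffix_append_single hksuf a)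
      · intro n h1 h2 hsuf
        have hnt : n ≤ t := key n h2 hsuf
        have hn1 : 1 ≤ n := by omega
        have hn'lt : n - 1 < P.length := by omega
        have htake : P.take n = P.take (n-1) ++ [P[n-1]] := by
          have := take_succ_eq hn'lt
          rwa [Nat.sub_add_cancel hn1] at this
        rw [htake] at hsuf
        obtain ⟨w, hw⟩ := hsuf
        rw [← List.append_assoc] at hw
        obtain ⟨hw1, hw2⟩ := List.append_inj' hw rfl
        have hlast : P[n-1] = a := by simpa using hw2
        have hsuf' : P.take (n-1) <:+ P.take t := ⟨w, hw1⟩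
        have hn'k : n - 1 ≤ k := le_kmp (by omega) hsuf'
        have hsufk : P.take (n-1) <:+ P.take k :=
          suffix_of_suffix_length_le' hsuf' hksuf
            (by simp [List.length_take]; omega)
        have : n ≤ m := by
          apply le_overlap h2
          rw [htake, hlast]
          exact suffix_append_single hsufk a
        omega
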